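/- For n ≥ 2, let M = ℂP^1 × ⋯ × ℂP^1 (n factors) carry the product Kähler metric ω where each factor is ℂP^1 with the round metric of constant sectional curvature 1/(n+1). Then Ric(ω) = (n+1)ω, but diam(M,ω) = √(n/(n+1)) · π > π/√2. In particular, a positive Ricci lower bound Ric ≥ (n+1)ω does not imply the diameter bound diam ≤ π/√2 for Kähler manifolds. -/

import Mathlib

noncomputable section
open Metric MeasureTheory Real Filter Set Topology

/-- The complex projective space `ℂPⁿ = ℙ(ℂ^{n+1})`. -/
abbrev CPn (n : ℕ) := Projectivization ℂ (EuclideanSpace ℂ (Fin (n + 1)))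

/-- The geodesic distance of the Fubini–Study metric `ω_{ℂPⁿ}`, normalised so that
`∫_{ℂPⁿ} ω_{ℂPⁿ}ⁿ = (2π)ⁿ` (equivalently `Ric = (n+1) ω_{ℂPⁿ}`).  With this
normalisation the geodesic distance satisfies
`cos²(d(x,y)/√2) = |⟨ξ,η⟩|²/(|ξ|²|η|²)` for any lifts `ξ, η`, hence
`d(x,y) = √2 · arccos(|⟨ξ,η⟩|/(|ξ||η|))` and `diam(ℂPⁿ) = π/√2`. -/
noncomputable def fsDist {n : ℕ} (x y : CPn n) : ℝ :=
  Real.sqrt 2 * Real.arccos (‖(inner ℂ x.rep y.rep : ℂ)‖ / (‖x.rep‖ * ‖y.rep‖))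

/-- The geodesic ball of radius `r` about `q` in `ℂPⁿ` for the Fubini–Study metric. -/
def fsBall {n : ℕ} (q : CPn n) (r : ℝ) : Set (CPn n) := {x | fsDist q x < r}

lemma fsDist_nonneg {n : ℕ} (x y : CPn n) : 0 ≤ fsDist x y :=
  mul_nonneg (Real.sqrt_nonneg 2) (Real.arccos_nonneg _)

lemma fsDist_le {n : ℕ} (x y : CPn n) : fsDist x y ≤ Real.sqrt 2 * (π / 2) := by
  apply mul_le_mul_of_nonneg_left _ (Real.sqrt_nonneg 2)
  rw [Real.arccos_le_pi_div_two]
  positivity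

lemma exists_fsDist_max : ∃ x y : CPn 1, fsDist x y = Real.sqrt 2 * (π / 2) := by
  have h0 : (EuclideanSpace.single (0 : Fin 2) (1 : ℂ)) ≠ 0 := by
    intro h
    have := congrArg (‖·‖) h
    simp [EuclideanSpace.norm_single] at this
  have h1 : (EuclideanSpace.single (1 : Fin 2) (1 : ℂ)) ≠ 0 := by
    intro h
    have := congrArg (‖·‖) h
    simp [EuclideanSpace.norm_single] at this
  set x : CPn 1 := Projectivization.mk ℂ _ h0 with hx
  set y : CPn 1 := Projectivization.mk ℂ _ h1 with hy
  refine ⟨x, y, ?_⟩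
  obtain ⟨a, ha⟩ := (Projectivization.mk_eq_mk_iff ℂ _ _ x.rep_nonzero h0).mp
    (by rw [Projectivization.mk_rep])
  obtain ⟨b, hb⟩ := (Projectivization.mk_eq_mk_iff ℂ _ _ y.rep_nonzero h1).mp
    (by rw [Projectivization.mk_rep])
  have hinner : (inner ℂ x.rep y.rep : ℂ) = 0 := by
    rw [← ha, ← hb, Units.smul_def, Units.smul_def]
    rw [inner_smul_left, inner_smul_right, EuclideanSpace.inner_single_left]
    simp [EuclideanSpace.single_apply]
  unfold fsDist
  rw [hinner]
  simp [Real.arccos_zero]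

/-- For `n ≥ 2`, let `M = ℂP¹ × ⋯ × ℂP¹` (`n` factors) carry the product
Kähler metric `ω` in which each factor is `ℂP¹` with the round metric normalised so that
the product satisfies `Ric(ω) = (n+1)ω` (each factor is the round 2-sphere of radius
`1/√(n+1)`, i.e. with `Ric = (n+1)·g`; in the paper's convention this is the "round
metric of curvature `1/(n+1)`").  Concretely, the geodesic distance on each factor is
`√(2/(n+1)) · fsDist` (the Fubini–Study distance on `ℂP¹`, which is the round sphere of
radius `1/√2`, rescaled to radius `1/√(n+1)`), and the distance of the Riemannian product
is the `ℓ²`-combination of the factor distances.  Then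
`diam(M,ω) = √(n/(n+1))·π`, which is `> π/√2` since `n ≥ 2`: a positive Ricci lower bound
`Ric ≥ (n+1)ω` does not imply the diameter bound `diam ≤ π/√2` for Kähler manifolds. -/
theorem diam_product_CP1_gt (n : ℕ) (hn : 2 ≤ n) :
    IsGreatest
      {d : ℝ | ∃ x y : Fin n → CPn 1,
        d = Real.sqrt (∑ i, (Real.sqrt (2 / (n + 1)) * fsDist (x i) (y i)) ^ 2)}
      (Real.sqrt (n / (n + 1)) * π) ∧
    π / Real.sqrt 2 < Real.sqrt (n / (n + 1)) * π := by
  have hn1 : (0:ℝ) < n + 1 := by positivity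
  have hc2 : (Real.sqrt (2 / (n + 1))) ^ 2 = 2 / (n + 1) :=
    Real.sq_sqrt (by positivity)
  have hterm : (Real.sqrt (2 / (n + 1)) * (Real.sqrt 2 * (π / 2))) ^ 2 = π ^ 2 / (n + 1) := by
    rw [mul_pow, mul_pow, hc2, Real.sq_sqrt (by norm_num : (0:ℝ) ≤ 2)]
    ring
  have hsumval : Real.sqrt ((n : ℝ) * (π ^ 2 / (n + 1))) = Real.sqrt (n / (n + 1)) * π := by
    rw [show (n : ℝ) * (π ^ 2 / (n + 1)) = (n / (n + 1)) * π ^ 2 by ring,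
      Real.sqrt_mul (by positivity), Real.sqrt_sq Real.pi_nonneg]
  constructor
  · constructor
    · obtain ⟨x₀, y₀, hxy⟩ := exists_fsDist_max
      refine ⟨fun _ => x₀, fun _ => y₀, ?_⟩
      rw [← hsumval]
      congr 1
      rw [Finset.sum_const, Finset.card_univ, Fintype.card_fin, nsmul_eq_mul, hxy, hterm]
    · rintro d ⟨x, y, rfl⟩
      rw [← hsumval]
      apply Real.sqrt_le_sqrt
      calc ∑ i, (Real.sqrt (2 / (n + 1)) * fsDist (x i) (y i)) ^ 2
          ≤ ∑ _i : Fin n, π ^ 2 / (n + 1) := by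
            apply Finset.sum_le_sum
            intro i _
            rw [← hterm]
            apply pow_le_pow_left₀ (mul_nonneg (Real.sqrt_nonneg _) (fsDist_nonneg _ _))
            exact mul_le_mul_of_nonneg_left (fsDist_le _ _) (Real.sqrt_nonneg _)
        _ = (n : ℝ) * (π ^ 2 / (n + 1)) := by
            rw [Finset.sum_const, Finset.card_univ, Fintype.card_fin, nsmul_eq_mul]
  · have h12 : (1:ℝ)/2 < n / (n + 1) := by
      rw [div_lt_div_iff₀ (by norm_num) hn1]
      have : (2:ℝ) ≤ n := by exact_mod_cast hn
      linarith
    have hs : Real.sqrt (1/2) < Real.sqrt (n / (n + 1)) :=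
      Real.sqrt_lt_sqrt (by norm_num) h12
    have h2 : π / Real.sqrt 2 = Real.sqrt (1/2) * π := by
      rw [one_div, Real.sqrt_inv, div_eq_mul_inv, mul_comm]
    rw [h2]
    exact mul_lt_mul_of_pos_right hs Real.pi_pos
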